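/- Let α₁(t) = −1 + e^{2πit} and α₂(t) = 1 − e^{2πit}, t ∈ [0,1], be loops in ℂ \ {−1,1} based at 0. Fix n ∈ ℤ \ {0} and k ∈ ℤ. Then: (1) the unique lift of the loop α₁ⁿ (the loop traversing α₁ n times if n > 0, and traversing the reverse of α₁ |n| times if n < 0) under the covering map f = f₁ ∘ f₂ with initial point −i/2 + ik has terminal point −i/2 + i(k+n) and image contained in the closed left half-plane {z : Re z ≤ 0}; (2) the unique lift of α₂ⁿ with initial point i/2 + ik has terminal point i/2 + i(k−n) and image contained in the closed right half-plane {z : Re z ≥ 0}. -/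

import Mathlib

open Complex unitInterval

/-- The set `iℤ = {i·m : m ∈ ℤ}` of integer multiples of `i`. -/
def intMulI : Set ℂ := {z : ℂ | ∃ m : ℤ, z = Complex.I * (m : ℂ)}

/-- `f₂(z) = (e^{πz} − 1)/(e^{πz} + 1)`. -/
noncomputable def fTwo (z : ℂ) : ℂ :=
  (Complex.exp (Real.pi * z) - 1) / (Complex.exp (Real.pi * z) + 1)

/-- `f₁(w) = (1/2)(w + 1/w)`. -/
noncomputable def fOne (w : ℂ) : ℂ := (w + w⁻¹) / 2

/-- The covering map `f = f₁ ∘ f₂` from `ℂ \ iℤ` onto `ℂ \ {−1,1}`. -/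
noncomputable def fCov (z : ℂ) : ℂ := fOne (fTwo z)

/-- The loop `α₁ⁿ(t) = −1 + e^{2πint}`, traversing `α₁` `n` times (the reverse of `α₁`
`|n|` times if `n < 0`). -/
noncomputable def alphaOnePow (n : ℤ) (t : ℝ) : ℂ :=
  -1 + Complex.exp (2 * Real.pi * Complex.I * (n : ℂ) * t)

/-- The loop `α₂ⁿ(t) = 1 − e^{2πint}`, traversing `α₂` `n` times (the reverse of `α₂`
`|n|` times if `n < 0`). -/
noncomputable def alphaTwoPow (n : ℤ) (t : ℝ) : ℂ :=
  1 - Complex.exp (2 * Real.pi * Complex.I * (n : ℂ) * t)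

/-! ### Auxiliary lemmas -/

noncomputable def qfun (n : ℤ) (t : ℝ) : ℂ := Complex.exp (2 * Real.pi * Complex.I * (n : ℂ) * t)

lemma pi_ne : (Real.pi : ℂ) ≠ 0 := by exact_mod_cast Real.pi_ne_zero

lemma qfun_abs (n : ℤ) (t : ℝ) : ‖qfun n t‖ = 1 := by
  rw [qfun, show 2 * (Real.pi:ℂ) * Complex.I * (n : ℂ) * (t:ℝ) =
    ((2 * Real.pi * n * t : ℝ) : ℂ) * Complex.I by push_cast; ring]
  exact Complex.norm_exp_ofReal_mul_I _

lemma two_sub_q_re (n : ℤ) (t : ℝ) : 1 ≤ ((2:ℂ) - qfun n t).re := by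
  have h := Complex.re_le_norm (qfun n t)
  rw [qfun_abs] at h
  simp only [Complex.sub_re]
  norm_num
  linarith

lemma two_sub_q_ne (n : ℤ) (t : ℝ) : (2:ℂ) - qfun n t ≠ 0 := by
  intro h
  have := two_sub_q_re n t
  rw [h] at this
  norm_num at this

lemma two_sub_q_slit (n : ℤ) (t : ℝ) : (2:ℂ) - qfun n t ∈ Complex.slitPlane := by
  rw [Complex.mem_slitPlane_iff]
  left; linarith [two_sub_q_re n t]

lemma one_le_abs_two_sub_q (n : ℤ) (t : ℝ) : 1 ≤ ‖(2:ℂ) - qfun n t‖ := by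
  calc (1:ℝ) ≤ ((2:ℂ) - qfun n t).re := two_sub_q_re n t
  _ ≤ ‖(2:ℂ) - qfun n t‖ := Complex.re_le_norm _

lemma qfun_zero (n : ℤ) : qfun n 0 = 1 := by simp [qfun]

lemma qfun_one (n : ℤ) : qfun n 1 = 1 := by
  rw [qfun, show 2 * (Real.pi:ℂ) * Complex.I * (n : ℂ) * ((1:ℝ):ℂ) =
    (n:ℂ) * (2 * Real.pi * Complex.I) by push_cast; ring]
  exact Complex.exp_int_mul_two_pi_mul_I n

lemma continuous_q (n : ℤ) : Continuous fun t : ℝ => qfun n t := by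
  unfold qfun
  exact Complex.continuous_exp.comp (continuous_const.mul Complex.continuous_ofReal)

lemma continuous_logpart (n : ℤ) : Continuous fun t : ℝ => Complex.log ((2:ℂ) - qfun n t) := by
  apply Continuous.clog (continuous_const.sub (continuous_q n))
  intro t; exact two_sub_q_slit n t

lemma fCov_eq {z : ℂ} (hz : z ∉ intMulI) :
    fCov z = (Complex.exp (2 * Real.pi * z) + 1) / (Complex.exp (2 * Real.pi * z) - 1) := by
  set w := Complex.exp (Real.pi * z) with hw
  have h1 : w ≠ 1 := by
    intro h
    rw [hw, Complex.exp_eq_one_iff] at h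
    obtain ⟨m, hm⟩ := h
    refine hz ⟨2*m, ?_⟩
    apply mul_left_cancel₀ pi_ne
    push_cast
    linear_combination hm
  have h2 : w ≠ -1 := by
    intro h
    rw [hw, show (-1:ℂ) = Complex.exp (Real.pi * Complex.I) by rw [Complex.exp_pi_mul_I],
      Complex.exp_eq_exp_iff_exists_int] at h
    obtain ⟨m, hm⟩ := h
    refine hz ⟨2*m+1, ?_⟩
    apply mul_left_cancel₀ pi_ne
    push_cast
    linear_combination hm
  have hw1 : w + 1 ≠ 0 := by
    intro h; exact h2 (by linear_combination h)
  have hw2 : w - 1 ≠ 0 := sub_ne_zero.mpr h1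
  have hww : w * w - 1 ≠ 0 := by
    rw [show w*w - 1 = (w-1)*(w+1) by ring]
    exact mul_ne_zero hw2 hw1
  have hE : Complex.exp (2 * Real.pi * z) = w * w := by
    rw [hw, ← Complex.exp_add]
    ring_nf
  rw [fCov, fTwo, fOne, ← hw, hE]
  have hfrac : (w - 1) / (w + 1) ≠ 0 := div_ne_zero hw2 hw1
  field_simp
  have h3 : w ^ 2 - 1 ≠ 0 := by rw [show w ^ 2 - 1 = w*w-1 by ring]; exact hww
  rw [eq_div_iff h3]
  ring

lemma exp_ne_one {z : ℂ} (hz : z ∉ intMulI) : Complex.exp (2 * Real.pi * z) - 1 ≠ 0 := by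
  intro h
  rw [sub_eq_zero, Complex.exp_eq_one_iff] at h
  obtain ⟨m, hm⟩ := h
  refine hz ⟨m, ?_⟩
  apply mul_left_cancel₀ (mul_ne_zero two_ne_zero pi_ne)
  linear_combination hm

lemma sub_mem_of_fCov_eq {z z' : ℂ} (hz : z ∉ intMulI) (hz' : z' ∉ intMulI)
    (h : fCov z = fCov z') : ∃ m : ℤ, z - z' = Complex.I * m := by
  rw [fCov_eq hz, fCov_eq hz'] at h
  rw [div_eq_div_iff (exp_ne_one hz) (exp_ne_one hz')] at h
  have hEE : Complex.exp (2 * Real.pi * z) = Complex.exp (2 * Real.pi * z') := by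
    linear_combination -h/2
  rw [Complex.exp_eq_exp_iff_exists_int] at hEE
  obtain ⟨m, hm⟩ := hEE
  refine ⟨m, ?_⟩
  apply mul_left_cancel₀ (mul_ne_zero two_ne_zero pi_ne)
  linear_combination hm

lemma lift_unique {γ γ' : I → ℂ} (hc : Continuous γ) (h : ∀ t, γ t ∉ intMulI)
    (hc' : Continuous γ') (h' : ∀ t, γ' t ∉ intMulI)
    (hf : ∀ t, fCov (γ' t) = fCov (γ t)) (h0 : γ' 0 = γ 0) : γ' = γ := by
  have key : ∀ t, ∃ m : ℤ, γ' t - γ t = Complex.I * m :=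
    fun t => sub_mem_of_fCov_eq (h' t) (h t) (hf t)
  have hSeq : {t : I | γ' t = γ t} = {t : I | ‖γ' t - γ t‖ < 1} := by
    ext t
    simp only [Set.mem_setOf_eq]
    constructor
    · intro ht; rw [ht]; simp
    · intro ht
      obtain ⟨m, hm⟩ := key t
      rw [hm] at ht
      have hm1 : |(m:ℝ)| < 1 := by simpa using ht
      have hm0 : m = 0 := by
        have h2 : ((|m| : ℤ) : ℝ) < 1 := by rw [Int.cast_abs]; exact hm1
        have h3 : |m| < 1 := by exact_mod_cast h2
        obtain ⟨hl, hr⟩ := abs_lt.mp h3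
        omega
      rw [hm0] at hm
      simp at hm
      exact sub_eq_zero.mp hm
  have hclopen : IsClopen {t : I | γ' t = γ t} := by
    constructor
    · exact isClosed_eq hc' hc
    · rw [hSeq]
      exact isOpen_lt (Continuous.norm (hc'.sub hc)) continuous_const
  have huniv : {t : I | γ' t = γ t} = Set.univ := by
    rcases isClopen_iff.mp hclopen with hemp | huniv
    · exfalso
      have : (0:I) ∈ {t : I | γ' t = γ t} := h0
      rw [hemp] at this
      exact this
    · exact huniv
  funext t
  have : t ∈ {t : I | γ' t = γ t} := huniv ▸ Set.mem_univ t
  exact this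

/-! ### The explicit lifts -/

noncomputable def lift1 (n k : ℤ) (t : ℝ) : ℂ :=
  -Complex.I/2 + Complex.I*k + Complex.I*n*t
    - (((2*Real.pi)⁻¹ : ℝ) : ℂ) * Complex.log ((2:ℂ) - qfun n t)

noncomputable def lift2 (n k : ℤ) (t : ℝ) : ℂ :=
  Complex.I/2 + Complex.I*k - Complex.I*n*t
    + (((2*Real.pi)⁻¹ : ℝ) : ℂ) * Complex.log ((2:ℂ) - qfun n t)

lemma exp_lift1 (n k : ℤ) (t : ℝ) :
    Complex.exp (2 * Real.pi * lift1 n k t) = -qfun n t * ((2:ℂ) - qfun n t)⁻¹ := by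
  have h2q := two_sub_q_ne n t
  have heq : 2 * (Real.pi:ℂ) * lift1 n k t
      = (-(Real.pi * Complex.I) + (k:ℂ) * (2 * Real.pi * Complex.I))
        + (2 * Real.pi * Complex.I * (n:ℂ) * (t:ℝ) + -(Complex.log ((2:ℂ) - qfun n t))) := by
    rw [lift1]
    push_cast
    have : ((2*Real.pi)⁻¹ : ℂ) * (2*Real.pi) = 1 := by
      rw [inv_mul_cancel₀]
      exact mul_ne_zero two_ne_zero pi_ne
    linear_combination (-(Complex.log ((2:ℂ) - qfun n t))) * this
  rw [heq, Complex.exp_add, Complex.exp_add, Complex.exp_add, Complex.exp_neg,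
    Complex.exp_neg, Complex.exp_pi_mul_I, Complex.exp_int_mul_two_pi_mul_I,
    Complex.exp_log h2q, ← qfun]
  ring

lemma exp_lift2 (n k : ℤ) (t : ℝ) :
    Complex.exp (2 * Real.pi * lift2 n k t) = -(qfun n t)⁻¹ * ((2:ℂ) - qfun n t) := by
  have h2q := two_sub_q_ne n t
  have heq : 2 * (Real.pi:ℂ) * lift2 n k t
      = ((Real.pi * Complex.I) + (k:ℂ) * (2 * Real.pi * Complex.I))
        + (-(2 * Real.pi * Complex.I * (n:ℂ) * (t:ℝ)) + (Complex.log ((2:ℂ) - qfun n t))) := by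
    rw [lift2]
    push_cast
    have : ((2*Real.pi)⁻¹ : ℂ) * (2*Real.pi) = 1 := by
      rw [inv_mul_cancel₀]
      exact mul_ne_zero two_ne_zero pi_ne
    linear_combination (Complex.log ((2:ℂ) - qfun n t)) * this
  rw [heq, Complex.exp_add, Complex.exp_add, Complex.exp_add, Complex.exp_neg,
    Complex.exp_pi_mul_I, Complex.exp_int_mul_two_pi_mul_I,
    Complex.exp_log h2q, ← qfun]
  ring

lemma re_lift1 (n k : ℤ) (t : ℝ) :
    (lift1 n k t).re = -((2*Real.pi)⁻¹ * Real.log (‖(2:ℂ) - qfun n t‖)) := by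
  simp [lift1, Complex.log_re, Complex.mul_re, Complex.mul_im]

lemma re_lift2 (n k : ℤ) (t : ℝ) :
    (lift2 n k t).re = (2*Real.pi)⁻¹ * Real.log (‖(2:ℂ) - qfun n t‖) := by
  simp [lift2, Complex.log_re, Complex.mul_re, Complex.mul_im]

lemma re_lift1_nonpos (n k : ℤ) (t : ℝ) : (lift1 n k t).re ≤ 0 := by
  rw [re_lift1]
  have h1 : 0 ≤ Real.log (‖(2:ℂ) - qfun n t‖) :=
    Real.log_nonneg (one_le_abs_two_sub_q n t)
  have h2 : (0:ℝ) ≤ (2*Real.pi)⁻¹ := by positivity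
  nlinarith

lemma re_lift2_nonneg (n k : ℤ) (t : ℝ) : 0 ≤ (lift2 n k t).re := by
  rw [re_lift2]
  have h1 : 0 ≤ Real.log (‖(2:ℂ) - qfun n t‖) :=
    Real.log_nonneg (one_le_abs_two_sub_q n t)
  have h2 : (0:ℝ) ≤ (2*Real.pi)⁻¹ := by positivity
  nlinarith

lemma q_eq_one_of_abs (n : ℤ) (t : ℝ) (habs : ‖(2:ℂ) - qfun n t‖ = 1) :
    qfun n t = 1 := by
  have h2 : Complex.normSq ((2:ℂ) - qfun n t) = 1 := by
    rw [← Complex.sq_norm, habs]; norm_num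
  have h3 : Complex.normSq (qfun n t) = 1 := by
    rw [← Complex.sq_norm, qfun_abs]; norm_num
  rw [Complex.normSq_apply, Complex.sub_re, Complex.sub_im] at h2
  rw [Complex.normSq_apply] at h3
  norm_num at h2
  have hre : (qfun n t).re = 1 := by nlinarith
  have him : (qfun n t).im = 0 := by nlinarith
  exact Complex.ext (by simpa using hre) (by simpa using him)

lemma nt_int_of_q_one (n : ℤ) (t : ℝ) (hq : qfun n t = 1) :
    ∃ j : ℤ, (n:ℂ) * (t:ℝ) = (j:ℂ) := by
  rw [qfun, Complex.exp_eq_one_iff] at hq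
  obtain ⟨j, hj⟩ := hq
  refine ⟨j, ?_⟩
  have hne : 2 * (Real.pi:ℂ) * Complex.I ≠ 0 :=
    mul_ne_zero (mul_ne_zero two_ne_zero pi_ne) Complex.I_ne_zero
  apply mul_right_cancel₀ hne
  linear_combination hj

lemma abs_eq_one_of_re_zero (n : ℤ) (t : ℝ)
    (hlog0 : (2*Real.pi)⁻¹ * Real.log (‖(2:ℂ) - qfun n t‖) = 0) :
    ‖(2:ℂ) - qfun n t‖ = 1 := by
  have hlog : Real.log (‖(2:ℂ) - qfun n t‖) = 0 := by
    have hπ : (0:ℝ) < (2*Real.pi)⁻¹ := by positivity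
    by_contra hne
    have h1 : 0 ≤ Real.log (‖(2:ℂ) - qfun n t‖) :=
      Real.log_nonneg (one_le_abs_two_sub_q n t)
    nlinarith [lt_of_le_of_ne h1 (Ne.symm hne)]
  rcases Real.log_eq_zero.mp hlog with h | h | h
  · linarith [one_le_abs_two_sub_q n t, h]
  · exact h
  · linarith [one_le_abs_two_sub_q n t, h]

lemma not_mem_lift1 (n k : ℤ) (t : ℝ) : lift1 n k t ∉ intMulI := by
  rintro ⟨m, hm⟩
  have h0 : (lift1 n k t).re = 0 := by
    rw [hm]; simp [Complex.mul_re]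
  rw [re_lift1, neg_eq_zero] at h0
  have habs := abs_eq_one_of_re_zero n t h0
  have hq := q_eq_one_of_abs n t habs
  obtain ⟨j, hj⟩ := nt_int_of_q_one n t hq
  rw [lift1, hq] at hm
  simp only [show (2:ℂ) - 1 = 1 by norm_num, Complex.log_one, mul_zero, sub_zero] at hm
  have hmain : (-(1:ℂ)/2 + k + n*t) = m := by
    apply mul_left_cancel₀ Complex.I_ne_zero
    linear_combination hm
  have hfin : ((2*k + 2*j - 2*m : ℤ) : ℂ) = 1 := by
    push_cast
    linear_combination 2*hmain - 2*hj
  have : (2*k + 2*j - 2*m : ℤ) = 1 := by exact_mod_cast hfin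
  omega

lemma not_mem_lift2 (n k : ℤ) (t : ℝ) : lift2 n k t ∉ intMulI := by
  rintro ⟨m, hm⟩
  have h0 : (lift2 n k t).re = 0 := by
    rw [hm]; simp [Complex.mul_re]
  rw [re_lift2] at h0
  have habs := abs_eq_one_of_re_zero n t h0
  have hq := q_eq_one_of_abs n t habs
  obtain ⟨j, hj⟩ := nt_int_of_q_one n t hq
  rw [lift2, hq] at hm
  simp only [show (2:ℂ) - 1 = 1 by norm_num, Complex.log_one, mul_zero, add_zero] at hm
  have hmain : ((1:ℂ)/2 + k - n*t) = m := by
    apply mul_left_cancel₀ Complex.I_ne_zero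
    linear_combination hm
  have hfin : ((2*k - 2*j - 2*m : ℤ) : ℂ) = -1 := by
    push_cast
    linear_combination 2*hmain + 2*hj
  have : (2*k - 2*j - 2*m : ℤ) = -1 := by exact_mod_cast hfin
  omega

lemma fCov_lift1 (n k : ℤ) (t : ℝ) : fCov (lift1 n k t) = alphaOnePow n t := by
  rw [fCov_eq (not_mem_lift1 n k t), exp_lift1]
  have h2q := two_sub_q_ne n t
  have hE1 : -qfun n t * ((2:ℂ) - qfun n t)⁻¹ - 1 ≠ 0 := by
    rw [show -qfun n t * ((2:ℂ) - qfun n t)⁻¹ - 1 = -2 * ((2:ℂ) - qfun n t)⁻¹ by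
      field_simp
      ring]
    exact mul_ne_zero (by norm_num) (inv_ne_zero h2q)
  rw [div_eq_iff hE1, alphaOnePow, ← qfun]
  field_simp
  ring

lemma fCov_lift2 (n k : ℤ) (t : ℝ) : fCov (lift2 n k t) = alphaTwoPow n t := by
  rw [fCov_eq (not_mem_lift2 n k t), exp_lift2]
  have h2q := two_sub_q_ne n t
  have hqne : qfun n t ≠ 0 := Complex.exp_ne_zero _
  have hE1 : -(qfun n t)⁻¹ * ((2:ℂ) - qfun n t) - 1 ≠ 0 := by
    rw [show -(qfun n t)⁻¹ * ((2:ℂ) - qfun n t) - 1 = -2 * (qfun n t)⁻¹ by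
      field_simp
      ring]
    exact mul_ne_zero (by norm_num) (inv_ne_zero hqne)
  rw [div_eq_iff hE1, alphaTwoPow, ← qfun]
  field_simp
  ring

lemma lift1_start (n k : ℤ) : lift1 n k 0 = -Complex.I / 2 + Complex.I * (k : ℂ) := by
  rw [lift1, qfun_zero, show (2:ℂ) - 1 = 1 by norm_num, Complex.log_one]
  push_cast
  ring

lemma lift1_end (n k : ℤ) : lift1 n k 1 = -Complex.I / 2 + Complex.I * ((k : ℂ) + (n : ℂ)) := by
  rw [lift1, qfun_one, show (2:ℂ) - 1 = 1 by norm_num, Complex.log_one]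
  push_cast
  ring

lemma lift2_start (n k : ℤ) : lift2 n k 0 = Complex.I / 2 + Complex.I * (k : ℂ) := by
  rw [lift2, qfun_zero, show (2:ℂ) - 1 = 1 by norm_num, Complex.log_one]
  push_cast
  ring

lemma lift2_end (n k : ℤ) : lift2 n k 1 = Complex.I / 2 + Complex.I * ((k : ℂ) - (n : ℂ)) := by
  rw [lift2, qfun_one, show (2:ℂ) - 1 = 1 by norm_num, Complex.log_one]
  push_cast
  ring

lemma continuous_lift1 (n k : ℤ) : Continuous fun t : ℝ => lift1 n k t := by
  unfold lift1
  apply Continuous.sub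
  · apply Continuous.add
    · exact continuous_const
    · exact continuous_const.mul Complex.continuous_ofReal
  · exact continuous_const.mul (continuous_logpart n)

lemma continuous_lift2 (n k : ℤ) : Continuous fun t : ℝ => lift2 n k t := by
  unfold lift2
  apply Continuous.add
  · apply Continuous.sub
    · exact continuous_const
    · exact continuous_const.mul Complex.continuous_ofReal
  · exact continuous_const.mul (continuous_logpart n)

/-- For `n ∈ ℤ \ {0}` and `k ∈ ℤ`: (1) the unique lift of `α₁ⁿ` under `f = f₁ ∘ f₂` with
initial point `−i/2 + ik` has terminal point `−i/2 + i(k+n)` and image in the closed left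
half-plane; (2) the unique lift of `α₂ⁿ` with initial point `i/2 + ik` has terminal point
`i/2 + i(k−n)` and image in the closed right half-plane. -/
theorem lift_of_alpha_pow (n : ℤ) (hn : n ≠ 0) (k : ℤ) :
    (∃ γ : I → ℂ,
      (Continuous γ ∧ (∀ t : I, γ t ∉ intMulI) ∧
        (∀ t : I, fCov (γ t) = alphaOnePow n (t : ℝ)) ∧
        γ 0 = -Complex.I / 2 + Complex.I * (k : ℂ)) ∧
      (∀ γ' : I → ℂ,
        (Continuous γ' ∧ (∀ t : I, γ' t ∉ intMulI) ∧
          (∀ t : I, fCov (γ' t) = alphaOnePow n (t : ℝ)) ∧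
          γ' 0 = -Complex.I / 2 + Complex.I * (k : ℂ)) → γ' = γ) ∧
      γ 1 = -Complex.I / 2 + Complex.I * ((k : ℂ) + (n : ℂ)) ∧
      (∀ t : I, (γ t).re ≤ 0)) ∧
    (∃ γ : I → ℂ,
      (Continuous γ ∧ (∀ t : I, γ t ∉ intMulI) ∧
        (∀ t : I, fCov (γ t) = alphaTwoPow n (t : ℝ)) ∧
        γ 0 = Complex.I / 2 + Complex.I * (k : ℂ)) ∧
      (∀ γ' : I → ℂ,
        (Continuous γ' ∧ (∀ t : I, γ' t ∉ intMulI) ∧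
          (∀ t : I, fCov (γ' t) = alphaTwoPow n (t : ℝ)) ∧
          γ' 0 = Complex.I / 2 + Complex.I * (k : ℂ)) → γ' = γ) ∧
      γ 1 = Complex.I / 2 + Complex.I * ((k : ℂ) - (n : ℂ)) ∧
      (∀ t : I, 0 ≤ (γ t).re)) := by
  constructor
  · refine ⟨fun t : I => lift1 n k (t : ℝ), ⟨?_, ?_, ?_, ?_⟩, ?_, ?_, ?_⟩
    · exact (continuous_lift1 n k).comp continuous_subtype_val
    · intro t; exact not_mem_lift1 n k t
    · intro t; exact fCov_lift1 n k t
    · simpa using lift1_start n k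
    · rintro γ' ⟨hc', hmem', hf', h0'⟩
      apply lift_unique ((continuous_lift1 n k).comp continuous_subtype_val)
        (fun t => not_mem_lift1 n k t) hc' hmem'
      · intro t
        exact (hf' t).trans (fCov_lift1 n k (t : ℝ)).symm
      · rw [h0']
        simpa using (lift1_start n k).symm
    · simpa using lift1_end n k
    · intro t; exact re_lift1_nonpos n k t
  · refine ⟨fun t : I => lift2 n k (t : ℝ), ⟨?_, ?_, ?_, ?_⟩, ?_, ?_, ?_⟩
    · exact (continuous_lift2 n k).comp continuous_subtype_val
    · intro t; exact not_mem_lift2 n k t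
    · intro t; exact fCov_lift2 n k t
    · simpa using lift2_start n k
    · rintro γ' ⟨hc', hmem', hf', h0'⟩
      apply lift_unique ((continuous_lift2 n k).comp continuous_subtype_val)
        (fun t => not_mem_lift2 n k t) hc' hmem'
      · intro t
        exact (hf' t).trans (fCov_lift2 n k (t : ℝ)).symm
      · rw [h0']
        simpa using (lift2_start n k).symm
    · simpa using lift2_end n k
    · intro t; exact re_lift2_nonneg n k t
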